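/- arXiv:1107.0397 — 2 statements merged into one kernel-verified Lean document; each statement's English description precedes it below -/
import Mathlib

section
/- Let H be a real Hilbert space, ι an index type, and (ψ_k)_{k ∈ ι} a Hilbert basis of H. Let A : H →L[ℝ] H be a continuous linear symmetric operator (⟪A x, y⟫ = ⟪x, A y⟫ for all x, y) such that A ψ_k = μ_k • ψ_k with μ_k ∈ ℝ. Let λ ≥ 0 be real and let δ > 0 satisfy δ ≤ |μ_k − λ| for every k ∈ ι. Suppose φ, v, w ∈ H satisfy φ = v + w and A w − λ • w = λ • v. Then ‖φ‖ ≤ (1 + λ/δ) · ‖v‖. -/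
open scoped RealInnerProductSpace

/-- Main estimate of Proposition 2: a mode `φ = v + w` with `(A − λ)w = λ v`
satisfies `‖φ‖ ≤ (1 + λ/δ) ‖v‖` when `λ` is at distance at least `δ > 0` from
the spectrum of `A`. -/
theorem mode_expulsion_bound {H : Type*} [NormedAddCommGroup H]
    [InnerProductSpace ℝ H] [CompleteSpace H] {ι : Type*}
    (b : HilbertBasis ι ℝ H) (A : H →L[ℝ] H)
    (hA : ∀ x y : H, ⟪A x, y⟫ = ⟪x, A y⟫)
    (μ : ι → ℝ) (hb : ∀ k, A (b k) = μ k • b k)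
    (lam : ℝ) (hlam : 0 ≤ lam) (δ : ℝ) (hδ : 0 < δ)
    (hgap : ∀ k, δ ≤ |μ k - lam|)
    (φ v w : H) (hφ : φ = v + w) (hw : A w - lam • w = lam • v) :
    ‖φ‖ ≤ (1 + lam / δ) * ‖v‖ := by
  -- coefficientwise identity
  have hcoef : ∀ k, (μ k - lam) * ⟪b k, w⟫ = lam * ⟪b k, v⟫ := by
    intro k
    have h1 : ⟪b k, A w⟫ = μ k * ⟪b k, w⟫ := by
      rw [← hA, hb k, real_inner_smul_left]
    have h2 : ⟪b k, A w - lam • w⟫ = ⟪b k, lam • v⟫ := by rw [hw]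
    rw [inner_sub_right, real_inner_smul_right, real_inner_smul_right, h1] at h2
    linarith
  -- pointwise bound on coefficients
  have hpt : ∀ k, |⟪b k, w⟫| ≤ (lam / δ) * |⟪b k, v⟫| := by
    intro k
    have h := hcoef k
    have habs : |μ k - lam| * |⟪b k, w⟫| = lam * |⟪b k, v⟫| := by
      rw [← abs_mul, h, abs_mul, abs_of_nonneg hlam]
    have hge : δ * |⟪b k, w⟫| ≤ lam * |⟪b k, v⟫| := by
      calc δ * |⟪b k, w⟫| ≤ |μ k - lam| * |⟪b k, w⟫| :=
            mul_le_mul_of_nonneg_right (hgap k) (abs_nonneg _)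
        _ = lam * |⟪b k, v⟫| := habs
    rw [div_mul_eq_mul_div, le_div_iff₀ hδ, mul_comm _ δ]
    linarith
  -- ‖w‖ ≤ (lam/δ) ‖v‖ via Parseval
  have hwv : ‖w‖ ≤ (lam / δ) * ‖v‖ := by
    have hp2 : (0:ℝ) < (2 : ENNReal).toReal := by norm_num
    have hsw := lp.hasSum_norm hp2 (b.repr w)
    have hsv := lp.hasSum_norm hp2 (b.repr v)
    rw [b.repr.norm_map] at hsw hsv
    simp_rw [show ((2:ENNReal).toReal) = ((2:ℕ):ℝ) by norm_num,
      Real.rpow_natCast] at hsw hsv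
    have hld : 0 ≤ lam / δ := by positivity
    have hsv' : HasSum (fun k => (lam / δ) ^ 2 * ‖b.repr v k‖ ^ 2)
        ((lam / δ) ^ 2 * ‖v‖ ^ 2) := hsv.mul_left _
    have hle : ‖w‖ ^ 2 ≤ (lam / δ) ^ 2 * ‖v‖ ^ 2 := by
      refine hasSum_le (fun k => ?_) hsw hsv'
      have hk := hpt k
      rw [b.repr_apply_apply, b.repr_apply_apply]
      have h : ‖⟪b k, w⟫‖ ≤ (lam / δ) * ‖⟪b k, v⟫‖ := by
        simpa [Real.norm_eq_abs] using hk
      calc ‖⟪b k, w⟫‖ ^ 2 ≤ ((lam / δ) * ‖⟪b k, v⟫‖) ^ 2 := by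
            gcongr
        _ = (lam / δ) ^ 2 * ‖⟪b k, v⟫‖ ^ 2 := by ring
    have hle' : ‖w‖ ^ 2 ≤ ((lam / δ) * ‖v‖) ^ 2 := by rw [mul_pow]; exact hle
    exact (pow_le_pow_iff_left₀ (norm_nonneg _)
      (mul_nonneg hld (norm_nonneg _)) two_ne_zero).mp hle'
  calc ‖φ‖ = ‖v + w‖ := by rw [hφ]
    _ ≤ ‖v‖ + ‖w‖ := norm_add_le _ _
    _ ≤ ‖v‖ + (lam / δ) * ‖v‖ := by linarith
    _ = (1 + lam / δ) * ‖v‖ := by ring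
end

section
/- Let H be a real Hilbert space, ι a nonempty index type, and (ψ_k)_{k ∈ ι} a Hilbert basis of H. Let A : H →L[ℝ] H be a continuous linear symmetric operator (⟪A x, y⟫ = ⟪x, A y⟫ for all x, y) such that A ψ_k = μ_k • ψ_k with μ_k ∈ ℝ. Let λ ≥ 0 be real and suppose φ, v, w ∈ H satisfy φ = v + w, A w − λ • w = λ • v, and ‖φ‖ > ‖v‖. Then the infimum ⨅_{k ∈ ι} |μ_k − λ| satisfies ⨅_{k ∈ ι} |μ_k − λ| ≤ λ · ‖v‖ / (‖φ‖ − ‖v‖). -/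
open scoped RealInnerProductSpace

/-- Contrapositive form of Proposition 2: if the mode `φ = v + w`, with
`(A − λ)w = λ v`, has norm exceeding `‖v‖`, then the distance from `λ` to the
spectrum `{μ_k}` is at most `λ ‖v‖ / (‖φ‖ − ‖v‖)`. -/
theorem spectrum_proximity_of_localization {H : Type*} [NormedAddCommGroup H]
    [InnerProductSpace ℝ H] [CompleteSpace H] {ι : Type*} [Nonempty ι]
    (b : HilbertBasis ι ℝ H) (A : H →L[ℝ] H)
    (hA : ∀ x y : H, ⟪A x, y⟫ = ⟪x, A y⟫)
    (μ : ι → ℝ) (hb : ∀ k, A (b k) = μ k • b k)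
    (lam : ℝ) (hlam : 0 ≤ lam)
    (φ v w : H) (hφ : φ = v + w) (hw : A w - lam • w = lam • v)
    (hbig : ‖v‖ < ‖φ‖) :
    ⨅ k, |μ k - lam| ≤ lam * ‖v‖ / (‖φ‖ - ‖v‖) := by
  set d : ℝ := ⨅ k, |μ k - lam| with hd
  have hbdd : BddBelow (Set.range fun k => |μ k - lam|) :=
    ⟨0, by rintro x ⟨k, rfl⟩; exact abs_nonneg _⟩
  have hd0 : 0 ≤ d := le_ciInf fun k => abs_nonneg _
  have hdle : ∀ k, d ≤ |μ k - lam| := fun k => ciInf_le hbdd k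
  -- coefficients
  set y : H := A w - lam • w with hy
  have hcoef : ∀ k, ⟪b k, y⟫ = (μ k - lam) * ⟪b k, w⟫ := by
    intro k
    have h1 : ⟪b k, A w⟫ = μ k * ⟪b k, w⟫ := by
      rw [← hA, hb k, real_inner_smul_left]
    simp [hy, inner_sub_right, real_inner_smul_right, h1, sub_mul]
  -- Parseval sums
  have hsw' : HasSum (fun k => ⟪b k, w⟫ ^ 2) (‖w‖ ^ 2) := by
    have h := b.hasSum_inner_mul_inner w w
    rw [real_inner_self_eq_norm_sq] at h
    have e : (fun k => ⟪b k, w⟫ ^ 2) = fun k => ⟪w, b k⟫ * ⟪b k, w⟫ :=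
      funext fun k => by rw [sq, real_inner_comm]
    rw [e]; exact h
  have hsy' : HasSum (fun k => ((μ k - lam) * ⟪b k, w⟫) ^ 2) (‖y‖ ^ 2) := by
    have h := b.hasSum_inner_mul_inner y y
    rw [real_inner_self_eq_norm_sq] at h
    have e : (fun k => ((μ k - lam) * ⟪b k, w⟫) ^ 2) = fun k => ⟪y, b k⟫ * ⟪b k, y⟫ :=
      funext fun k => by
        have h2 := hcoef k; rw [real_inner_comm] at h2; rw [real_inner_comm y, h2]; ring
    rw [e]; exact h
  -- compare sums
  have hkey : d ^ 2 * ‖w‖ ^ 2 ≤ ‖y‖ ^ 2 := by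
    have hs1 : HasSum (fun k => d ^ 2 * ⟪b k, w⟫ ^ 2) (d ^ 2 * ‖w‖ ^ 2) :=
      hsw'.mul_left _
    refine hasSum_le (fun k => ?_) hs1 hsy'
    have h1 : d ^ 2 ≤ (μ k - lam) ^ 2 := by
      rw [← sq_abs (μ k - lam)]
      exact sq_le_sq' (le_trans (neg_nonpos_of_nonneg (abs_nonneg _)) hd0) (hdle k)
    calc d ^ 2 * ⟪b k, w⟫ ^ 2 ≤ (μ k - lam) ^ 2 * ⟪b k, w⟫ ^ 2 :=
          mul_le_mul_of_nonneg_right h1 (sq_nonneg _)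
      _ = ((μ k - lam) * ⟪b k, w⟫) ^ 2 := (mul_pow _ _ _).symm
  have hnormy : ‖y‖ = lam * ‖v‖ := by
    rw [hw, norm_smul, Real.norm_eq_abs, abs_of_nonneg hlam]
  have hdw : d * ‖w‖ ≤ lam * ‖v‖ := by
    have h2 : (d * ‖w‖) ^ 2 ≤ (lam * ‖v‖) ^ 2 := by
      rw [mul_pow]; rw [hnormy] at hkey; exact hkey
    nlinarith [mul_nonneg hd0 (norm_nonneg w), mul_nonneg hlam (norm_nonneg v)]
  have hwlb : ‖φ‖ - ‖v‖ ≤ ‖w‖ := by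
    have := norm_add_le v w
    rw [← hφ] at this; linarith
  have hpos : 0 < ‖φ‖ - ‖v‖ := by linarith
  rw [le_div_iff₀ hpos]
  calc d * (‖φ‖ - ‖v‖) ≤ d * ‖w‖ := mul_le_mul_of_nonneg_left hwlb hd0
    _ ≤ lam * ‖v‖ := hdw
end
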